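/- Over a finite signature (finitely many function symbols, each of finite arity, and finitely many constants), the set of terms of depth at most d that are not n-cyclic is finite for every d; moreover, if no term in a set S of terms is n-cyclic and the signature has k function symbols, then every term in S has depth at most n·k. -/

import Mathlib

inductive Term (C F : Type) : Type
  | const : C → Term C F
  | fn : F → List (Term C F) → Term C F

namespace Term

mutual
  def dep {C F : Type} : Term C F → ℕ
    | const _ => 0
    | fn _ ts => 1 + depList ts
  def depList {C F : Type} : List (Term C F) → ℕ
    | [] => 0
    | t :: ts => max (dep t) (depList ts)
end

inductive Subterm {C F : Type} : Term C F → Term C F → Prop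
  | refl (t : Term C F) : Subterm t t
  | fn {t s : Term C F} {f : F} {ts : List (Term C F)} :
      s ∈ ts → Subterm t s → Subterm t (Term.fn f ts)

def ProperSubterm {C F : Type} (s t : Term C F) : Prop :=
  Subterm s t ∧ s ≠ t

def NCyclic {C F : Type} (n : ℕ) (t : Term C F) : Prop :=
  ∃ (f : F) (s : ℕ → List (Term C F)),
    Subterm (Term.fn f (s (n + 1))) t ∧
    ∀ i, 1 ≤ i → i ≤ n → ProperSubterm (Term.fn f (s i)) (Term.fn f (s (i + 1)))

variable {C F : Type}

theorem dep_le_depList {u : Term C F} {ts : List (Term C F)} (h : u ∈ ts) :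
    dep u ≤ depList ts := by
  induction ts with
  | nil => simp at h
  | cons a l ih =>
    rcases List.mem_cons.1 h with rfl | h
    · simp [depList]
    · simp only [depList]; exact le_trans (ih h) (le_max_right _ _)

theorem dep_le_of_subterm {s t : Term C F} (h : Subterm s t) : dep s ≤ dep t := by
  induction h with
  | refl => exact le_rfl
  | fn hmem hsub ih =>
    exact le_trans ih (le_trans (dep_le_depList hmem) (by simp only [dep]; omega))

theorem subterm_trans {a b c : Term C F} (h1 : Subterm a b) (h2 : Subterm b c) :
    Subterm a c := by
  induction h2 with
  | refl => exact h1
  | fn hmem hsub ih => exact Subterm.fn hmem ih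

theorem proper_dep {s t : Term C F} (h : ProperSubterm s t) : dep s < dep t := by
  obtain ⟨hsub, hne⟩ := h
  cases hsub with
  | refl => exact absurd rfl hne
  | fn hmem h' =>
    calc dep s ≤ _ := dep_le_of_subterm h'
    _ ≤ _ := dep_le_depList hmem
    _ < _ := by simp only [dep]; omega

theorem proper_of {s t : Term C F} (h : Subterm s t) (hd : dep s < dep t) :
    ProperSubterm s t := ⟨h, fun e => by subst e; omega⟩

theorem proper_trans {a b c : Term C F} (h1 : ProperSubterm a b) (h2 : ProperSubterm b c) :
    ProperSubterm a c :=
  proper_of (subterm_trans h1.1 h2.1) (lt_trans (proper_dep h1) (proper_dep h2))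

theorem exists_mem_dep_eq {ts : List (Term C F)} (h : ts ≠ []) :
    ∃ u ∈ ts, dep u = depList ts := by
  induction ts with
  | nil => simp at h
  | cons a l ih =>
    rcases eq_or_ne l [] with rfl | hl
    · exact ⟨a, by simp, by simp [depList]⟩
    · obtain ⟨u, hu, hd⟩ := ih hl
      rcases le_or_gt (depList l) (dep a) with hle | hlt
      · exact ⟨a, by simp, by simp [depList]; omega⟩
      · exact ⟨u, by simp [hu], by simp [depList]; omega⟩

theorem chain_exists : ∀ D : ℕ, ∀ t : Term C F, dep t = D → 1 ≤ D →
    ∃ (g : ℕ → F) (s : ℕ → List (Term C F)),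
      (∀ i, 1 ≤ i → i ≤ D → Subterm (Term.fn (g i) (s i)) t) ∧
      (∀ i, 1 ≤ i → i + 1 ≤ D →
        ProperSubterm (Term.fn (g i) (s i)) (Term.fn (g (i+1)) (s (i+1)))) := by
  intro D
  induction D using Nat.strong_induction_on with
  | _ D ih =>
    intro t ht hD
    cases t with
    | const c => simp [dep] at ht; omega
    | fn f ts =>
      simp only [dep] at ht
      rcases Nat.eq_zero_or_pos (depList ts) with h0 | hpos
      · refine ⟨fun _ => f, fun _ => ts, ?_, ?_⟩
        · intro i h1 h2
          exact Subterm.refl _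
        · intro i h1 h2; omega
      · have hne : ts ≠ [] := by intro e; subst e; simp [depList] at hpos
        obtain ⟨u, hu, hdu⟩ := exists_mem_dep_eq hne
        obtain ⟨g', s', hc1, hc2⟩ := ih (depList ts) (by omega) u hdu (by omega)
        refine ⟨fun i => if i = D then f else g' i, fun i => if i = D then ts else s' i,
          ?_, ?_⟩
        · intro i h1 h2
          rcases eq_or_ne i D with rfl | hiD
          · simp only [if_pos rfl]; exact Subterm.refl _
          · have him : i ≤ depList ts := by omega
            simp only [if_neg hiD]
            exact Subterm.fn hu (hc1 i h1 him)
        · intro i h1 h2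
          rcases eq_or_ne (i+1) D with hD' | hne'
          · have hiD : i ≠ D := by omega
            simp only [if_neg hiD, if_pos hD']
            refine proper_of (Subterm.fn hu (hc1 i h1 (by omega))) ?_
            have hle := dep_le_of_subterm (hc1 i h1 (by omega))
            simp only [dep] at hle ⊢
            omega
          · have hiD : i ≠ D := by omega
            simp only [if_neg hiD, if_neg hne']
            exact hc2 i h1 (by omega)

theorem chain_proper {D : ℕ} {g : ℕ → F} {s : ℕ → List (Term C F)}
    (h : ∀ i, 1 ≤ i → i + 1 ≤ D →
      ProperSubterm (Term.fn (g i) (s i)) (Term.fn (g (i+1)) (s (i+1)))) :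
    ∀ j' j, 1 ≤ j → j < j' → j' ≤ D →
      ProperSubterm (Term.fn (g j) (s j)) (Term.fn (g j') (s j')) := by
  intro j'
  induction j' with
  | zero => omega
  | succ k ihk =>
    intro j h1 h2 h3
    rcases eq_or_ne j k with rfl | hjk
    · exact h j h1 h3
    · exact proper_trans (ihk j h1 (by omega) (by omega)) (h k (by omega) h3)

theorem not_ncyclic_dep_le [Fintype F] {n : ℕ} {t : Term C F}
    (h : ¬ NCyclic n t) : dep t ≤ n * Fintype.card F := by
  classical
  by_contra hcon
  push_neg at hcon
  obtain ⟨g, s, hc1, hc2⟩ := chain_exists (dep t) t rfl (by omega)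
  set D := dep t with hDdef
  have hmaps : ∀ a ∈ Finset.Icc 1 D, g a ∈ (Finset.univ : Finset F) :=
    fun _ _ => Finset.mem_univ _
  have hcard : (Finset.univ : Finset F).card * n < (Finset.Icc 1 D).card := by
    rw [Nat.card_Icc, Finset.card_univ]
    have := hcon
    rw [mul_comm]
    omega
  obtain ⟨f, -, hf⟩ := Finset.exists_lt_card_fiber_of_mul_lt_card_of_maps_to hmaps hcard
  obtain ⟨B, hBsub, hBcard⟩ := Finset.exists_subset_card_eq (show n + 1 ≤ _ from hf)
  let emb := B.orderEmbOfFin hBcard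
  let idx : ℕ → ℕ := fun i => emb ⟨min (i - 1) n, by omega⟩
  have hIcc : ∀ i, idx i ∈ Finset.Icc 1 D ∧ g (idx i) = f := by
    intro i
    have hm : idx i ∈ B := Finset.orderEmbOfFin_mem B hBcard _
    simpa using Finset.mem_filter.1 (hBsub hm)
  apply h
  refine ⟨f, fun i => s (idx i), ?_, ?_⟩
  · obtain ⟨hmem, heq⟩ := hIcc (n + 1)
    rw [Finset.mem_Icc] at hmem
    rw [← heq]
    exact hc1 _ hmem.1 hmem.2
  · intro i h1 h2
    have hlt : idx i < idx (i + 1) := by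
      apply (B.orderEmbOfFin hBcard).strictMono
      show (⟨min (i - 1) n, _⟩ : Fin (n + 1)) < ⟨min (i + 1 - 1) n, _⟩
      rw [Fin.mk_lt_mk]
      omega
    obtain ⟨hm1, he1⟩ := hIcc i
    obtain ⟨hm2, he2⟩ := hIcc (i + 1)
    rw [Finset.mem_Icc] at hm1 hm2
    have := chain_proper hc2 (idx (i + 1)) (idx i) hm1.1 hlt hm2.2
    rwa [he1, he2] at this

end Term

/-- Well-formed terms: every function symbol is applied to a list matching its arity. -/
inductive WF {C F : Type} (ar : F → ℕ) : Term C F → Prop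
  | const (c : C) : WF ar (Term.const c)
  | fn {f : F} {ts : List (Term C F)} :
      ts.length = ar f → (∀ s ∈ ts, WF ar s) → WF ar (Term.fn f ts)

theorem wf_dep_finite {C F : Type} [Fintype C] [Fintype F] (ar : F → ℕ) :
    ∀ d : ℕ, {t : Term C F | WF ar t ∧ Term.dep t ≤ d}.Finite := by
  intro d
  induction d with
  | zero =>
    apply (Set.finite_range (Term.const : C → Term C F)).subset
    rintro t ⟨hwf, hd⟩
    cases hwf with
    | const c => exact ⟨c, rfl⟩
    | fn h1 h2 => simp [Term.dep] at hd
  | succ d ihd =>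
    have hlist : ∀ f : F,
        {l : List (Term C F) | l.length = ar f ∧
          ∀ x ∈ l, x ∈ {t | WF ar t ∧ Term.dep t ≤ d}}.Finite := by
      intro f
      have hfin : Finite {t : Term C F | WF ar t ∧ Term.dep t ≤ d} := ihd.to_subtype
      have hL : {l : List {t : Term C F | WF ar t ∧ Term.dep t ≤ d} |
          l.length = ar f}.Finite := List.finite_length_eq _ _
      apply (hL.image (List.map Subtype.val)).subset
      rintro l ⟨hlen, hmem⟩
      refine ⟨l.pmap (fun x h => (⟨x, h⟩ : {t : Term C F | WF ar t ∧ Term.dep t ≤ d}))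
        hmem, ?_, ?_⟩
      · show List.length _ = _
        simpa using hlen
      · rw [List.map_pmap]
        clear hlen
        induction l with
        | nil => rfl
        | cons a l ih =>
          simp only [List.pmap, List.cons.injEq, true_and]
          exact ih _
    apply Set.Finite.subset
      ((Set.finite_range (Term.const : C → Term C F)).union
        (Set.finite_iUnion (fun f : F => (hlist f).image (Term.fn f))))
    rintro t ⟨hwf, hd⟩
    cases hwf with
    | const c => exact Or.inl ⟨c, rfl⟩
    | @fn f ts hlen hwf' =>
      refine Or.inr (Set.mem_iUnion.2 ⟨f, ts, ⟨hlen, ?_⟩, rfl⟩)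
      intro x hx
      have hd' : Term.depList ts ≤ d := by
        simp only [Term.dep] at hd; omega
      exact ⟨hwf' x hx, le_trans (Term.dep_le_depList hx) hd'⟩

theorem finiteness_and_depth_bound {C F : Type} [Fintype C] [Fintype F]
    (ar : F → ℕ) (n : ℕ) (hn : 1 ≤ n) :
    (∀ d : ℕ, {t : Term C F | WF ar t ∧ Term.dep t ≤ d ∧ ¬ Term.NCyclic n t}.Finite) ∧
    (∀ S : Set (Term C F), (∀ t ∈ S, ¬ Term.NCyclic n t) →
      ∀ t ∈ S, Term.dep t ≤ n * Fintype.card F) := by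
  constructor
  · intro d
    apply (wf_dep_finite ar d).subset
    rintro t ⟨h1, h2, _⟩
    exact ⟨h1, h2⟩
  · intro S hS t htS
    exact Term.not_ncyclic_dep_le (hS t htS)
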